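/- There is no injective group homomorphism from A₆ into GL(3,ℂ) whose composition with the projection to PGL(3,ℂ) is injective with image the Valentiner group; equivalently, any subgroup of SL(3,ℂ) projecting onto a subgroup of PGL(3,ℂ) isomorphic to A₆ has order divisible by 3·360 = 1080, since the preimage in SL(3,ℂ) contains the three scalar matrices jⁿI with j a primitive cube root of unity. -/

import Mathlib

open Matrix Module Complex

noncomputable section

lemma exists_eigenbasis (φ : Module.End ℂ (Fin 3 → ℂ)) (h3 : φ^3 = 1) :
    ∃ (b : Basis (Fin 3) ℂ (Fin 3 → ℂ)) (μ : Fin 3 → ℂ), ∀ i, φ (b i) = μ i • b i := by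
  set ω := exp (2 * Real.pi * I / 3) with hω
  have prim := Complex.isPrimitiveRoot_exp 3 (by norm_num)
  have hω3 : ω^3 = 1 := prim.pow_eq_one
  have hω1 : ω ≠ 1 := prim.ne_one (by norm_num)
  have hω21 : ω^2 ≠ 1 := prim.pow_ne_one_of_pos_of_lt (by norm_num) (by norm_num)
  have hω0 : ω ≠ 0 := by
    intro h; rw [h] at hω3; norm_num at hω3
  have hsum : ω^2 + ω + 1 = 0 := by
    have key : (ω - 1) * (ω^2 + ω + 1) = 0 := by linear_combination hω3
    rcases mul_eq_zero.mp key with h | h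
    · exact absurd (sub_eq_zero.mp h) hω1
    · exact h
  have hωω2 : ω ≠ ω^2 := fun h => hω1 ((mul_left_cancel₀ hω0 (by linear_combination h)).symm)
  set lam : Fin 3 → ℂ := ![1, ω, ω^2] with hlam
  have hinj : Function.Injective lam := by
    have h01 : lam 0 ≠ lam 1 := by simpa [hlam] using fun h => hω1 h.symm
    have h02 : lam 0 ≠ lam 2 := by simpa [hlam] using fun h => hω21 h.symm
    have h12 : lam 1 ≠ lam 2 := by simpa [hlam] using hωω2
    intro i j hij
    fin_cases i <;> fin_cases j <;>
      first
        | rfl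
        | exact absurd hij h01 | exact absurd hij.symm h01
        | exact absurd hij h02 | exact absurd hij.symm h02
        | exact absurd hij h12 | exact absurd hij.symm h12
  set E : Fin 3 → Submodule ℂ (Fin 3 → ℂ) := fun i => Module.End.eigenspace φ (lam i) with hE
  have hindep : iSupIndep E := (Module.End.eigenspaces_iSupIndep φ).comp hinj
  have hphi3 : ∀ v, φ (φ (φ v)) = v := by
    intro v
    have := LinearMap.ext_iff.mp h3 v
    simpa [pow_succ, Module.End.mul_apply] using this
  have hspan : iSup E = ⊤ := by
    rw [eq_top_iff]
    intro v _
    have hmem : ∀ l : ℂ, l^3 = 1 → (3⁻¹ : ℂ) • (v + l^2 • φ v + l • φ (φ v)) ∈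
        Module.End.eigenspace φ l := by
      intro l hl
      rw [Module.End.mem_eigenspace_iff]
      have h1 : φ ((3⁻¹ : ℂ) • (v + l^2 • φ v + l • φ (φ v)))
          = (3⁻¹ : ℂ) • (φ v + l^2 • φ (φ v) + l • v) := by
        rw [LinearMap.map_smul, LinearMap.map_add, LinearMap.map_add, LinearMap.map_smul,
          LinearMap.map_smul, hphi3]
      rw [h1]
      match_scalars <;>
        first
          | ring1
          | linear_combination ((2:ℂ)/3) * hl
          | linear_combination (-(2:ℂ)/3) * hl
          | linear_combination ((1:ℂ)/3) * hl
          | linear_combination (-(1:ℂ)/3) * hl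
    have hd : v = (3⁻¹ : ℂ) • (v + (1:ℂ)^2 • φ v + (1:ℂ) • φ (φ v))
        + ((3⁻¹ : ℂ) • (v + ω^2 • φ v + ω • φ (φ v))
        + (3⁻¹ : ℂ) • (v + (ω^2)^2 • φ v + ω^2 • φ (φ v))) := by
      match_scalars <;>
        first
          | ring1
          | linear_combination ((2:ℂ)/3) * hsum + ((2:ℂ)/3*ω) * hω3
          | linear_combination (-(2:ℂ)/3) * hsum + (-(2:ℂ)/3*ω) * hω3
          | linear_combination ((2:ℂ)/3) * hsum
          | linear_combination (-(2:ℂ)/3) * hsum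
          | linear_combination ((1:ℂ)/3) * hsum + ((1:ℂ)/3*ω) * hω3
          | linear_combination (-(1:ℂ)/3) * hsum + (-(1:ℂ)/3*ω) * hω3
          | linear_combination ((1:ℂ)/3) * hsum
          | linear_combination (-(1:ℂ)/3) * hsum
    rw [hd]
    refine Submodule.add_mem _ (Submodule.mem_iSup_of_mem 0 ?_)
      (Submodule.add_mem _ (Submodule.mem_iSup_of_mem 1 ?_) (Submodule.mem_iSup_of_mem 2 ?_))
    · simpa [hE, hlam] using hmem 1 (by norm_num)
    · simpa [hE, hlam] using hmem ω hω3
    · simpa [hE, hlam] using hmem (ω^2) (by linear_combination (ω^3+1)*hω3)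
  have hint : DirectSum.IsInternal E :=
    (DirectSum.isInternal_submodule_iff_iSupIndep_and_iSup_eq_top E).mpr ⟨hindep, hspan⟩
  let bs : ∀ i, Basis (Fin (Module.finrank ℂ (E i))) ℂ (E i) := fun i => Module.finBasis ℂ (E i)
  let b' := hint.collectedBasis bs
  have hcard : Fintype.card ((i : Fin 3) × Fin (Module.finrank ℂ (E i))) = 3 := by
    have := Module.finrank_eq_card_basis b'
    simp only [Module.finrank_pi, Fintype.card_fin] at this
    omega
  let eqv := Fintype.equivFinOfCardEq hcard
  refine ⟨b'.reindex eqv, fun j => lam (eqv.symm j).1, fun j => ?_⟩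
  simp only [Basis.reindex_apply]
  exact Module.End.mem_eigenspace_iff.mp (hint.collectedBasis_mem bs (eqv.symm j))

lemma valentiner_core {A B T : Matrix (Fin 3) (Fin 3) ℂ} (hT : IsUnit T)
    (hexists : ∀ (φ : Module.End ℂ (Fin 3 → ℂ)), φ^3 = 1 →
      ∃ (b : Basis (Fin 3) ℂ (Fin 3 → ℂ)) (μ : Fin 3 → ℂ), ∀ i, φ (b i) = μ i • b i)
    (hA3 : A^3 = 1) (hB3 : B^3 = 1) (hdA : A.det = 1) (hdB : B.det = 1)
    (hcm : A*B = B*A) (hTA : T*A = B*T) (hT2 : T*(T*A) = A*(A*(T*T)))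
    (hAB : A ≠ B) : False := by
  set u := hT.unit with hudef
  have hu : (↑u : Matrix (Fin 3) (Fin 3) ℂ) = T := hT.unit_spec
  set ε := (Matrix.toLinAlgEquiv' : Matrix (Fin 3) (Fin 3) ℂ ≃ₐ[ℂ] Module.End ℂ (Fin 3 → ℂ))
    with hε
  set φ := ε A with hφ
  set ψ := ε B with hψ
  set τ := ε T with hτdef
  have hφ3 : φ^3 = 1 := by rw [hφ, ← _root_.map_pow, hA3, _root_.map_one]
  have hψ3 : ψ^3 = 1 := by rw [hψ, ← _root_.map_pow, hB3, _root_.map_one]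
  have happ3 : ∀ (θ : Module.End ℂ (Fin 3 → ℂ)), θ^3 = 1 → ∀ v, θ (θ (θ v)) = v := by
    intro θ h v
    have := LinearMap.ext_iff.mp h v
    simpa [pow_succ, Module.End.mul_apply] using this
  have hcm' : ∀ v, φ (ψ v) = ψ (φ v) := by
    intro v
    have h : ε (A*B) = ε (B*A) := by rw [hcm]
    rw [_root_.map_mul, _root_.map_mul] at h
    exact LinearMap.ext_iff.mp h v
  have hτφ : ∀ v, ψ (τ v) = τ (φ v) := by
    intro v
    have h : ε (T*A) = ε (B*T) := by rw [hTA]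
    rw [_root_.map_mul, _root_.map_mul] at h
    exact (LinearMap.ext_iff.mp h v).symm
  have hT2' : ∀ v, τ (τ (φ v)) = φ (φ (τ (τ v))) := by
    intro v
    have h : ε (T*(T*A)) = ε (A*(A*(T*T))) := by rw [hT2]
    simp only [_root_.map_mul] at h
    have h2 := LinearMap.ext_iff.mp h v
    simpa [Module.End.mul_apply] using h2
  have hτbij : Function.Bijective τ :=
    (Module.End.isUnit_iff τ).mp (IsUnit.map ε.toAlgHom.toRingHom.toMonoidHom hT)
  obtain ⟨b, μ, hb⟩ := hexists φ hφ3
  have hcube : ∀ (θ : Module.End ℂ (Fin 3 → ℂ)) (ν : Fin 3 → ℂ), θ^3 = 1 →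
      (∀ i, θ (b i) = ν i • b i) → ∀ i, ν i ^ 3 = 1 := by
    intro θ ν h3 hθ i
    have h1 : θ (θ (θ (b i))) = b i := happ3 θ h3 (b i)
    simp only [hθ, _root_.map_smul, smul_smul] at h1
    have h2 : (ν i ^ 3) • b i = (1:ℂ) • b i := by
      rw [one_smul, ← h1]; congr 1; ring
    exact smul_left_injective ℂ (b.ne_zero i) h2
  have hnz : ∀ (ν : Fin 3 → ℂ), (∀ i, ν i ^ 3 = 1) → ∀ k, ν k ≠ 0 := by
    intro ν hc k h
    have := hc k
    rw [h] at this
    norm_num at this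
  have hdet : ∀ (M : Matrix (Fin 3) (Fin 3) ℂ) (ν : Fin 3 → ℂ),
      (∀ i, (ε M) (b i) = ν i • b i) → ν 0 * ν 1 * ν 2 = M.det := by
    intro M ν hθ
    have hmat : LinearMap.toMatrix b b (ε M) = Matrix.diagonal ν := by
      ext i j
      rw [LinearMap.toMatrix_apply, hθ j, _root_.map_smul]
      simp only [Basis.repr_self, Finsupp.smul_single, smul_eq_mul, mul_one,
        Finsupp.single_apply, Matrix.diagonal_apply]
      rcases eq_or_ne i j with h | h
      · subst h; simp
      · rw [if_neg (fun hh => h hh.symm), if_neg h]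
    have h1 : LinearMap.det (ε M) = M.det := LinearMap.det_toLin' M
    rw [← h1, ← LinearMap.det_toMatrix b, hmat, Matrix.det_diagonal, Fin.prod_univ_three]
  have hscal : ∀ (M : Matrix (Fin 3) (Fin 3) ℂ) (ν : Fin 3 → ℂ) (m : ℂ),
      (∀ i, (ε M) (b i) = ν i • b i) → (∀ k, ν k = m) → M = m • (1 : Matrix (Fin 3) (Fin 3) ℂ) := by
    intro M ν m hθ hm
    apply ε.injective
    have h1 : ε (m • (1 : Matrix (Fin 3) (Fin 3) ℂ)) = m • (1 : Module.End ℂ (Fin 3 → ℂ)) := by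
      rw [_root_.map_smul, _root_.map_one]
    rw [h1]
    apply Basis.ext b
    intro i
    rw [hθ i, hm i]
    simp
  have third : ∀ x y : ℂ, x^3 = 1 → x*x*y = 1 → y = x := by
    intro x y hx hxy
    have hx0 : x ≠ 0 := fun h => by rw [h] at hx; norm_num at hx
    have h : x^2 * y = x^2 * x := by linear_combination hxy - hx
    exact mul_left_cancel₀ (pow_ne_zero 2 hx0) h
  have htrick : ∀ (ν : Fin 3 → ℂ), (∀ i, ν i ^ 3 = 1) → ν 0 * ν 1 * ν 2 = 1 →
      ¬ Function.Injective ν → ∃ m, ∀ k, ν k = m := by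
    intro ν hc hp hni
    have hcases : ν 0 = ν 1 ∨ ν 0 = ν 2 ∨ ν 1 = ν 2 := by
      by_contra hcon
      push_neg at hcon
      obtain ⟨h01, h02, h12⟩ := hcon
      apply hni
      intro p q hpq
      fin_cases p <;> fin_cases q <;>
        first
          | rfl
          | exact absurd hpq h01 | exact absurd hpq.symm h01
          | exact absurd hpq h02 | exact absurd hpq.symm h02
          | exact absurd hpq h12 | exact absurd hpq.symm h12
    refine ⟨ν 0, ?_⟩
    rcases hcases with h | h | h
    · have h2 : ν 2 = ν 0 := third (ν 0) (ν 2) (hc 0) (by linear_combination hp + (ν 0 * ν 2) * h)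
      intro k; fin_cases k
      · rfl
      · exact h.symm
      · exact h2
    · have h1 : ν 1 = ν 0 := third (ν 0) (ν 1) (hc 0) (by linear_combination hp + (ν 0 * ν 1) * h)
      intro k; fin_cases k
      · rfl
      · exact h1
      · exact h.symm
    · have h1 : ν 1 = ν 0 := (third (ν 1) (ν 0) (hc 1) (by linear_combination hp + (ν 0 * ν 1) * h)).symm
      intro k; fin_cases k
      · rfl
      · exact h1
      · exact h.symm.trans h1
  have hABscal : ∀ m : ℂ, (A = m • (1 : Matrix (Fin 3) (Fin 3) ℂ) ∨
      B = m • (1 : Matrix (Fin 3) (Fin 3) ℂ)) → False := by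
    rintro m (hAm | hBm)
    · have h1 : B * T = (m • (1 : Matrix (Fin 3) (Fin 3) ℂ)) * T := by
        rw [← hTA, hAm, mul_smul_comm, smul_mul_assoc, mul_one, one_mul]
      exact hAB (hAm.trans (hT.mul_right_cancel h1).symm)
    · have h1 : T * A = T * (m • (1 : Matrix (Fin 3) (Fin 3) ℂ)) := by
        rw [hTA, hBm, mul_smul_comm, smul_mul_assoc, mul_one, one_mul]
      exact hAB ((hT.mul_left_cancel h1).trans hBm.symm)
  have hμ3 : ∀ i, μ i ^ 3 = 1 := hcube φ μ hφ3 hb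
  have hμinj : Function.Injective μ := by
    by_contra hni
    obtain ⟨m, hm⟩ := htrick μ hμ3 (by rw [hdet A μ hb, hdA]) hni
    exact hABscal m (Or.inl (hscal A μ m hb hm))
  -- key coordinate lemma
  have key : ∀ (θ : Module.End ℂ (Fin 3 → ℂ)) (ν : Fin 3 → ℂ),
      (∀ i, θ (b i) = ν i • b i) → ∀ (x : Fin 3 → ℂ) (c : ℂ), θ x = c • x →
      ∀ j, ν j ≠ c → b.repr x j = 0 := by
    intro θ ν hθ x c hx j hj
    have h1 : θ x = ∑ i, (ν i * b.repr x i) • b i := by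
      conv_lhs => rw [← Basis.sum_repr b x]
      rw [map_sum]
      congr 1
      ext i
      rw [_root_.map_smul, hθ i, smul_smul, mul_comm]
    have h2 : b.repr (θ x) j = ν j * b.repr x j := by rw [h1, Basis.repr_sum_self]
    have h3 : b.repr (θ x) j = c * b.repr x j := by
      rw [hx, _root_.map_smul]
      rfl
    have h4 : (ν j - c) * b.repr x j = 0 := by
      rw [sub_mul, h2.symm.trans h3]; ring
    rcases mul_eq_zero.mp h4 with h | h
    · exact absurd (sub_eq_zero.mp h) hj
    · exact h
  have decomp : ∀ (θ : Module.End ℂ (Fin 3 → ℂ)) (ν : Fin 3 → ℂ),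
      (∀ i, θ (b i) = ν i • b i) → Function.Injective ν →
      ∀ (x : Fin 3 → ℂ) (c : ℂ) (j : Fin 3), θ x = c • x → ν j = c →
      x = b.repr x j • b j := by
    intro θ ν hθ hνinj x c j hx hj
    conv_lhs => rw [← Basis.sum_repr b x]
    rw [Finset.sum_eq_single j]
    · intro k _ hk
      have : ν k ≠ c := fun h => hk (hνinj (h.trans hj.symm))
      rw [key θ ν hθ x c hx k this, zero_smul]
    · intro h
      exact absurd (Finset.mem_univ j) h
  -- eigenvalues of ψ
  have hψeig : ∀ i, ∃ c : ℂ, ψ (b i) = c • b i := by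
    intro i
    have hx : φ (ψ (b i)) = μ i • ψ (b i) := by
      rw [hcm' (b i), hb i, _root_.map_smul]
    exact ⟨b.repr (ψ (b i)) i, decomp φ μ hb hμinj (ψ (b i)) (μ i) i hx rfl⟩
  choose ν hν using hψeig
  have hν3 : ∀ i, ν i ^ 3 = 1 := hcube ψ ν hψ3 hν
  have hνinj : Function.Injective ν := by
    by_contra hni
    obtain ⟨m, hm⟩ := htrick ν hν3 (by rw [hdet B ν hν, hdB]) hni
    exact hABscal m (Or.inr (hscal B ν m hν hm))
  -- the permutation
  have hτeig : ∀ i, ∃ j, ν j = μ i ∧ τ (b i) = b.repr (τ (b i)) j • b j ∧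
      b.repr (τ (b i)) j ≠ 0 := by
    intro i
    have hx : ψ (τ (b i)) = μ i • τ (b i) := by
      rw [hτφ (b i), hb i, _root_.map_smul]
    have hxne : τ (b i) ≠ 0 := by
      intro h
      have : b i = 0 := hτbij.1 (h.trans (map_zero τ).symm)
      exact b.ne_zero i this
    have hex : ∃ j, b.repr (τ (b i)) j ≠ 0 := by
      by_contra hall
      push_neg at hall
      apply hxne
      conv_lhs => rw [← Basis.sum_repr b (τ (b i))]
      simp [hall]
    obtain ⟨j, hj⟩ := hex
    have hνj : ν j = μ i := by
      by_contra hne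
      exact hj (key ψ ν hν (τ (b i)) (μ i) hx j hne)
    exact ⟨j, hνj, decomp ψ ν hν hνinj (τ (b i)) (μ i) j hx hνj, hj⟩
  choose σ hσν hσeq hσne using hτeig
  have hσinj : Function.Injective σ := by
    intro i j h
    apply hμinj
    rw [← hσν i, ← hσν j, h]
  -- main relation: μ i = μ (σ (σ i)) ^ 2
  have hrel : ∀ i, μ i = μ (σ (σ i)) ^ 2 := by
    intro i
    obtain ⟨c1, hc1eq, hc1ne⟩ : ∃ c1, τ (b i) = c1 • b (σ i) ∧ c1 ≠ 0 :=
      ⟨_, hσeq i, hσne i⟩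
    obtain ⟨c2, hc2eq, hc2ne⟩ : ∃ c2, τ (b (σ i)) = c2 • b (σ (σ i)) ∧ c2 ≠ 0 :=
      ⟨_, hσeq (σ i), hσne (σ i)⟩
    have hLL : τ (τ (φ (b i))) = (μ i * c1 * c2) • b (σ (σ i)) := by
      rw [hb i, _root_.map_smul, hc1eq, smul_smul, _root_.map_smul, hc2eq, smul_smul]
    have hL : φ (φ (τ (τ (b i)))) = (c1 * c2 * (μ (σ (σ i)) * μ (σ (σ i)))) • b (σ (σ i)) := by
      rw [hc1eq, _root_.map_smul, hc2eq, smul_smul, _root_.map_smul, hb (σ (σ i)), smul_smul,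
        _root_.map_smul, hb (σ (σ i)), smul_smul]
      congr 1
      ring
    have h1 := hT2' (b i)
    rw [hLL, hL] at h1
    have h4 := smul_left_injective ℂ (b.ne_zero (σ (σ i))) h1
    have h5 : (c1 * c2) * μ i = (c1 * c2) * μ (σ (σ i)) ^ 2 := by linear_combination h4
    exact mul_left_cancel₀ (mul_ne_zero hc1ne hc2ne) h5
  -- endgame
  have hperm : ∀ p : Equiv.Perm (Fin 3), (∀ i, p (p (p (p i))) = i) → ∀ i, p (p i) = i := by
    decide
  let e : Equiv.Perm (Fin 3) := Equiv.ofBijective σ (Finite.injective_iff_bijective.mp hσinj)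
  have he : ∀ i, e i = σ i := fun _ => rfl
  have h4 : ∀ i, e (e (e (e i))) = i := by
    intro i
    apply hμinj
    simp only [he]
    rw [hrel i, hrel (σ (σ i))]
    linear_combination (-(μ (σ (σ (σ (σ i)))))) * hμ3 (σ (σ (σ (σ i))))
  have h2 : ∀ i, σ (σ i) = i := fun i => hperm e h4 i
  have hone : ∀ i, μ i = 1 := by
    intro i
    have := hrel i
    rw [h2 i] at this
    have hμ0 : μ i ≠ 0 := hnz μ hμ3 i
    have : μ i * 1 = μ i * μ i := by linear_combination this
    have h1 := mul_left_cancel₀ hμ0 this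
    exact h1.symm
  exact absurd (hμinj ((hone 0).trans (hone 1).symm)) (by decide)


open Equiv in
private def aP : Equiv.Perm (Fin 6) := c[0, 1, 2]
open Equiv in
private def bP : Equiv.Perm (Fin 6) := c[3, 4, 5]
open Equiv in
private def tP : Equiv.Perm (Fin 6) := c[0, 3] * c[1, 4, 2, 5]
open Equiv in
private def gP : Equiv.Perm (Fin 6) := c[1, 2] * c[3, 4]

private lemma aPmem : aP ∈ alternatingGroup (Fin 6) := by
  rw [Equiv.Perm.mem_alternatingGroup]; decide
private lemma bPmem : bP ∈ alternatingGroup (Fin 6) := by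
  rw [Equiv.Perm.mem_alternatingGroup]; decide
private lemma tPmem : tP ∈ alternatingGroup (Fin 6) := by
  rw [Equiv.Perm.mem_alternatingGroup]; decide
private lemma gPmem : gP ∈ alternatingGroup (Fin 6) := by
  rw [Equiv.Perm.mem_alternatingGroup]; decide

/-- `A₆` admits no injective homomorphism into `GL(3, ℂ)`. -/
lemma no_A6_in_GL3 (f : alternatingGroup (Fin 6) →* Matrix.GeneralLinearGroup (Fin 3) ℂ) :
    ¬ Function.Injective f := by
  intro hinj
  set aA : alternatingGroup (Fin 6) := ⟨aP, aPmem⟩ with haA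
  set bA : alternatingGroup (Fin 6) := ⟨bP, bPmem⟩ with hbA
  set tA : alternatingGroup (Fin 6) := ⟨tP, tPmem⟩ with htA
  set gA : alternatingGroup (Fin 6) := ⟨gP, gPmem⟩ with hgA
  set A : Matrix (Fin 3) (Fin 3) ℂ := ((f aA : Matrix.GeneralLinearGroup (Fin 3) ℂ) :
    Matrix (Fin 3) (Fin 3) ℂ) with hA
  set B : Matrix (Fin 3) (Fin 3) ℂ := ((f bA : Matrix.GeneralLinearGroup (Fin 3) ℂ) :
    Matrix (Fin 3) (Fin 3) ℂ) with hB
  set T : Matrix (Fin 3) (Fin 3) ℂ := ((f tA : Matrix.GeneralLinearGroup (Fin 3) ℂ) :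
    Matrix (Fin 3) (Fin 3) ℂ) with hT
  set G : Matrix (Fin 3) (Fin 3) ℂ := ((f gA : Matrix.GeneralLinearGroup (Fin 3) ℂ) :
    Matrix (Fin 3) (Fin 3) ℂ) with hG
  have haA3 : aA ^ 3 = 1 := by
    apply Subtype.ext
    show aP ^ 3 = 1
    decide
  have hbA3 : bA ^ 3 = 1 := by
    apply Subtype.ext
    show bP ^ 3 = 1
    decide
  have hcmA : aA * bA = bA * aA := by
    apply Subtype.ext
    show aP * bP = bP * aP
    decide
  have hTAA : tA * aA = bA * tA := by
    apply Subtype.ext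
    show tP * aP = bP * tP
    decide
  have hT2A : tA * (tA * aA) = aA * (aA * (tA * tA)) := by
    apply Subtype.ext
    show tP * (tP * aP) = aP * (aP * (tP * tP))
    decide
  have hGA : gA * aA = aA * (aA * gA) := by
    apply Subtype.ext
    show gP * aP = aP * (aP * gP)
    decide
  have hABne : aA ≠ bA := by
    intro h
    have : aP = bP := congrArg Subtype.val h
    exact absurd this (by decide)
  -- push to matrices
  have hA3 : A ^ 3 = 1 := by
    rw [hA, ← Units.val_pow_eq_pow_val, ← _root_.map_pow, haA3, _root_.map_one, Units.val_one]
  have hB3 : B ^ 3 = 1 := by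
    rw [hB, ← Units.val_pow_eq_pow_val, ← _root_.map_pow, hbA3, _root_.map_one, Units.val_one]
  have hcm : A * B = B * A := by
    rw [hA, hB, ← Units.val_mul, ← Units.val_mul, ← _root_.map_mul, ← _root_.map_mul, hcmA]
  have hTAm : T * A = B * T := by
    rw [hA, hB, hT, ← Units.val_mul, ← Units.val_mul, ← _root_.map_mul, ← _root_.map_mul, hTAA]
  have hT2m : T * (T * A) = A * (A * (T * T)) := by
    simp only [hA, hT, ← Units.val_mul, ← _root_.map_mul]
    rw [hT2A]
  have hGm : G * A = A * (A * G) := by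
    rw [hA, hG, ← Units.val_mul, ← Units.val_mul, ← Units.val_mul, ← _root_.map_mul, ← _root_.map_mul,
      ← _root_.map_mul, hGA]
  have hABm : A ≠ B := by
    intro h
    exact hABne (hinj (Units.ext h))
  have hAunit : IsUnit A := (f aA).isUnit
  have hGunit : IsUnit G := (f gA).isUnit
  have hTunit : IsUnit T := (f tA).isUnit
  have hdAne : A.det ≠ 0 := ((Matrix.isUnit_iff_isUnit_det A).mp hAunit).ne_zero
  have hdGne : G.det ≠ 0 := ((Matrix.isUnit_iff_isUnit_det G).mp hGunit).ne_zero
  have hdTne : T.det ≠ 0 := ((Matrix.isUnit_iff_isUnit_det T).mp hTunit).ne_zero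
  have hdA : A.det = 1 := by
    have h1 : G.det * A.det = A.det * (A.det * G.det) := by
      rw [← Matrix.det_mul, ← Matrix.det_mul, ← Matrix.det_mul, hGm]
    have h2 : A.det * (G.det * 1) = A.det * (G.det * A.det) := by linear_combination h1
    have h3 := mul_left_cancel₀ hdAne h2
    have h4 := mul_left_cancel₀ hdGne h3
    exact h4.symm
  have hdB : B.det = 1 := by
    have h1 : T.det * A.det = B.det * T.det := by
      rw [← Matrix.det_mul, ← Matrix.det_mul, hTAm]
    have h2 : T.det * B.det = T.det * A.det := by linear_combination -h1
    rw [← hdA]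
    exact mul_left_cancel₀ hdTne h2
  exact valentiner_core hTunit exists_eigenbasis hA3 hB3 hdA hdB hcm hTAm hT2m hABm


/-- `PGL3` is `PGL(3,ℂ)`, the quotient of `GL(3,ℂ)` by its center (the scalar matrices). -/
abbrev PGL3 : Type :=
  Matrix.GeneralLinearGroup (Fin 3) ℂ ⧸ Subgroup.center (Matrix.GeneralLinearGroup (Fin 3) ℂ)

/-- The projection `GL(3,ℂ) → PGL(3,ℂ)`. -/
abbrev projPGL3 : Matrix.GeneralLinearGroup (Fin 3) ℂ →* PGL3 :=
  QuotientGroup.mk' (Subgroup.center (Matrix.GeneralLinearGroup (Fin 3) ℂ))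

/-- The projection `SL(3,ℂ) → PGL(3,ℂ)`. -/
abbrev SL3toPGL3 : Matrix.SpecialLinearGroup (Fin 3) ℂ →* PGL3 :=
  projPGL3.comp Matrix.SpecialLinearGroup.toGL

private lemma toGL3_injective :
    Function.Injective (Matrix.SpecialLinearGroup.toGL :
      Matrix.SpecialLinearGroup (Fin 3) ℂ →* Matrix.GeneralLinearGroup (Fin 3) ℂ) := by
  intro x y h
  exact Subtype.ext (congrArg Units.val h)

/-- There is no injective group homomorphism `A₆ → GL(3,ℂ)` whose composition with the projection
to `PGL(3,ℂ)` is injective; equivalently, any subgroup of `SL(3,ℂ)` projecting onto a subgroup of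
`PGL(3,ℂ)` isomorphic to `A₆` (the Valentiner group) has order divisible by `3·360 = 1080`. -/
theorem A6_does_not_lift_to_GL3_and_valentiner_preimage_order :
    (¬ ∃ f : alternatingGroup (Fin 6) →* Matrix.GeneralLinearGroup (Fin 3) ℂ,
        Function.Injective f ∧ Function.Injective (projPGL3.comp f)) ∧
    (∀ G : Subgroup (Matrix.SpecialLinearGroup (Fin 3) ℂ),
        Nonempty (G.map SL3toPGL3 ≃* alternatingGroup (Fin 6)) →
        (3 * 360 : ℕ) ∣ Nat.card G) := by
  constructor
  · rintro ⟨f, hf, -⟩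
    exact no_A6_in_GL3 f hf
  · rintro G ⟨e⟩
    set q := SL3toPGL3.subgroupMap G with hq
    have hqsurj : Function.Surjective q := SL3toPGL3.subgroupMap_surjective G
    set ψ : G →* alternatingGroup (Fin 6) := e.toMonoidHom.comp q with hψ
    have hψsurj : Function.Surjective ψ := e.surjective.comp hqsurj
    have hker : ∀ x : G, x ∈ ψ.ker →
        (x : Matrix.SpecialLinearGroup (Fin 3) ℂ) ∈
          Subgroup.center (Matrix.SpecialLinearGroup (Fin 3) ℂ) := by
      intro x hx
      have h0 : ψ x = 1 := hx
      have h1 : q x = 1 := by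
        apply e.injective
        rw [_root_.map_one]
        exact h0
      have h2 : SL3toPGL3 (x : Matrix.SpecialLinearGroup (Fin 3) ℂ) = 1 :=
        congrArg Subtype.val h1
      have h3 : Matrix.SpecialLinearGroup.toGL
          (x : Matrix.SpecialLinearGroup (Fin 3) ℂ) ∈
          Subgroup.center (Matrix.GeneralLinearGroup (Fin 3) ℂ) :=
        (QuotientGroup.eq_one_iff _).mp h2
      rw [Subgroup.mem_center_iff]
      intro y
      have h4 := Subgroup.mem_center_iff.mp h3 (Matrix.SpecialLinearGroup.toGL y)
      have h5 : Matrix.SpecialLinearGroup.toGL (y * (x : Matrix.SpecialLinearGroup (Fin 3) ℂ))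
          = Matrix.SpecialLinearGroup.toGL ((x : Matrix.SpecialLinearGroup (Fin 3) ℂ) * y) := by
        rw [_root_.map_mul, _root_.map_mul, h4]
      exact toGL3_injective h5
    let θ : ψ.ker →* Subgroup.center (Matrix.SpecialLinearGroup (Fin 3) ℂ) :=
      { toFun := fun x => ⟨(x : G), hker x.1 x.2⟩,
        map_one' := rfl,
        map_mul' := fun _ _ => rfl }
    have θinj : Function.Injective θ := by
      intro x y h
      have h1 := Subtype.ext_iff.mp h
      exact Subtype.ext (Subtype.ext h1)
    have hcenter3 : Nat.card (Subgroup.center (Matrix.SpecialLinearGroup (Fin 3) ℂ)) = 3 := by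
      have eqv := (Matrix.SpecialLinearGroup.center_equiv_rootsOfUnity' (R := ℂ) (0 : Fin 3))
      rw [Nat.card_congr eqv.toEquiv]
      haveI : NeZero (Fintype.card (Fin 3)) := ⟨by simp⟩
      exact (Complex.card_rootsOfUnity (Fintype.card (Fin 3))).trans (by simp)
    have hcfin : Finite (Subgroup.center (Matrix.SpecialLinearGroup (Fin 3) ℂ)) := by
      have eqv := (Matrix.SpecialLinearGroup.center_equiv_rootsOfUnity' (R := ℂ) (0 : Fin 3))
      exact Finite.of_equiv _ eqv.toEquiv.symm
    have hkdvd : Nat.card ψ.ker ∣ 3 := by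
      have hd := Subgroup.card_dvd_of_injective θ θinj
      rwa [hcenter3] at hd
    have hA6card : Nat.card (alternatingGroup (Fin 6)) = 360 := by
      have h2 := two_mul_card_alternatingGroup (α := Fin 6)
      have h3 : Fintype.card (Equiv.Perm (Fin 6)) = 720 := by
        rw [Fintype.card_perm, Fintype.card_fin]
        decide
      rw [h3] at h2
      rw [Nat.card_eq_fintype_card]
      omega
    have hker_ne : Nat.card ψ.ker ≠ 1 := by
      intro h1
      have hkerbot : ψ.ker = ⊥ := Subgroup.eq_bot_of_card_eq _ h1
      have hinj : Function.Injective ψ := (MonoidHom.ker_eq_bot_iff ψ).mp hkerbot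
      let χ := MulEquiv.ofBijective ψ ⟨hinj, hψsurj⟩
      let ι : alternatingGroup (Fin 6) →* Matrix.GeneralLinearGroup (Fin 3) ℂ :=
        ((Matrix.SpecialLinearGroup.toGL).comp G.subtype).comp χ.symm.toMonoidHom
      apply no_A6_in_GL3 ι
      exact toGL3_injective.comp (G.subtype_injective.comp χ.symm.injective)
    have hker3 : Nat.card ψ.ker = 3 := by
      rcases (Nat.prime_three).eq_one_or_self_of_dvd _ hkdvd with h | h
      · exact absurd h hker_ne
      · exact h
    have hquot : Nat.card (G ⧸ ψ.ker) = 360 := by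
      rw [Nat.card_congr (QuotientGroup.quotientKerEquivOfSurjective ψ hψsurj).toEquiv, hA6card]
    have hcardG : Nat.card G = 360 * 3 := by
      rw [Subgroup.card_eq_card_quotient_mul_card_subgroup ψ.ker, hquot, hker3]
    rw [hcardG]
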